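/- Let Ω ⊂ ℝⁿ be a bounded open set and let u : Ω → ℝ^{n+1} be 1-Lipschitz (for instance, the continuous representative of a W^{2,2} isometric immersion). Let U₁ and U₂ be regions in Ω of dimensions k₁ and k₂ respectively (i.e., each U_i is a relatively open connected subset of a k_i-dimensional affine subspace of ℝⁿ, contained in Ω) with U₁ ∩ U₂ ≠ ∅, and suppose there exists a point x ∈ U₁ ∩ U₂ belonging to the relative interior of both U₁ and U₂. If u is an affine isometry on U₁ and on U₂, then u is an affine isometry on conv(U₁ ∪ U₂) ∩ Ω, where conv denotes the convex hull. -/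

import Mathlib

open Set
open scoped RealInnerProductSpace

noncomputable section

/-- `u` is an affine isometry on the set `S`: it agrees on `S` with an affine
map and preserves Euclidean distances between points of `S`. -/
def IsAffineIsometryOn {n m : ℕ}
    (u : EuclideanSpace ℝ (Fin n) → EuclideanSpace ℝ (Fin m))
    (S : Set (EuclideanSpace ℝ (Fin n))) : Prop :=
  (∃ A : EuclideanSpace ℝ (Fin n) →ᵃ[ℝ] EuclideanSpace ℝ (Fin m),
    ∀ y ∈ S, u y = A y) ∧
  ∀ y ∈ S, ∀ z ∈ S, dist (u y) (u z) = dist y z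

/-- `U` is a `k`-dimensional region: a nonempty relatively open connected
subset of a `k`-dimensional affine subspace of `ℝⁿ`. -/
def IsRegionOfDim {n : ℕ} (k : ℕ) (U : Set (EuclideanSpace ℝ (Fin n))) : Prop :=
  ∃ A : AffineSubspace ℝ (EuclideanSpace ℝ (Fin n)),
    Module.finrank ℝ A.direction = k ∧
    U ⊆ (A : Set (EuclideanSpace ℝ (Fin n))) ∧ IsConnected U ∧
    ∃ V, IsOpen V ∧ U = V ∩ (A : Set (EuclideanSpace ℝ (Fin n)))

/-- The relative interior of `U` inside the affine subspace `A`: points of `U`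
having a relative neighborhood in `A` contained in `U`. Since regions are
relatively open, every point of a region is relatively interior to it;
we record the hypothesis nevertheless, as in the paper. -/
def InRelativeInterior {n : ℕ} (U : Set (EuclideanSpace ℝ (Fin n)))
    (x : EuclideanSpace ℝ (Fin n)) : Prop :=
  ∃ ε > (0:ℝ),
    Metric.ball x ε ∩ (affineSpan ℝ U : Set (EuclideanSpace ℝ (Fin n))) ⊆ U

/-- **Spreading affine isometries from two crossing regions (Corollary 3.14).**
Let `u : Ω → ℝ^{n+1}` be 1-Lipschitz on the bounded open set `Ω ⊆ ℝⁿ`, and let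
`U₁`, `U₂` be regions in `Ω` of dimensions `k₁`, `k₂` meeting at a point `x`
interior to both, on each of which `u` is an affine isometry. Then `u` is an
affine isometry on `conv(U₁ ∪ U₂) ∩ Ω`. -/
lemma inner_eq_of_norm_eq {E F : Type*} [NormedAddCommGroup E] [InnerProductSpace ℝ E]
    [NormedAddCommGroup F] [InnerProductSpace ℝ F] {a b : E} {a' b' : F}
    (h1 : ‖a‖ = ‖a'‖) (h2 : ‖b‖ = ‖b'‖) (h3 : ‖a - b‖ = ‖a' - b'‖) :
    ⟪a, b⟫ = ⟪a', b'⟫ := by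
  have e1 := norm_sub_sq_real a b
  have e2 := norm_sub_sq_real a' b'
  rw [h1, h2, h3] at e1
  linarith

lemma inner_ge_of_norm_le {E F : Type*} [NormedAddCommGroup E] [InnerProductSpace ℝ E]
    [NormedAddCommGroup F] [InnerProductSpace ℝ F] {a b : E} {a' b' : F}
    (h1 : ‖a‖ = ‖a'‖) (h2 : ‖b‖ = ‖b'‖) (h3 : ‖a - b‖ ≤ ‖a' - b'‖) :
    ⟪a', b'⟫ ≤ ⟪a, b⟫ := by
  have e1 := norm_sub_sq_real a b
  have e2 := norm_sub_sq_real a' b'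
  have h3' : ‖a - b‖ ^ 2 ≤ ‖a' - b'‖ ^ 2 := by
    have := norm_nonneg (a - b); nlinarith
  rw [h1, h2] at e1
  linarith

set_option maxHeartbeats 1000000 in
theorem affine_isometry_on_convex_hull_of_regions
    {n : ℕ}
    (Ω : Set (EuclideanSpace ℝ (Fin n)))
    (hΩopen : IsOpen Ω) (hΩbdd : Bornology.IsBounded Ω)
    (u : EuclideanSpace ℝ (Fin n) → EuclideanSpace ℝ (Fin (n+1)))
    (hu : LipschitzOnWith 1 u Ω)
    (k₁ k₂ : ℕ) (hk₁ : k₁ ≤ n) (hk₂ : k₂ ≤ n)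
    (U₁ U₂ : Set (EuclideanSpace ℝ (Fin n)))
    (hU₁ : IsRegionOfDim k₁ U₁) (hU₂ : IsRegionOfDim k₂ U₂)
    (hU₁Ω : U₁ ⊆ Ω) (hU₂Ω : U₂ ⊆ Ω)
    (x : EuclideanSpace ℝ (Fin n)) (hx : x ∈ U₁ ∩ U₂)
    (hxint₁ : InRelativeInterior U₁ x) (hxint₂ : InRelativeInterior U₂ x)
    (hu₁ : IsAffineIsometryOn u U₁) (hu₂ : IsAffineIsometryOn u U₂) :
    IsAffineIsometryOn u (convexHull ℝ (U₁ ∪ U₂) ∩ Ω) := by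
  classical
  obtain ⟨hx₁, hx₂⟩ := hx
  obtain ⟨⟨A₁, hA₁⟩, hd₁⟩ := hu₁
  obtain ⟨⟨A₂, hA₂⟩, hd₂⟩ := hu₂
  set S₀ : Set (EuclideanSpace ℝ (Fin n)) := U₁ ∪ U₂ with hS₀
  have hS₀Ω : S₀ ⊆ Ω := union_subset hU₁Ω hU₂Ω
  have hxS₀ : x ∈ S₀ := Or.inl hx₁
  -- norm versions of the hypotheses
  have hnorm₁ : ∀ y ∈ U₁, ∀ z ∈ U₁, ‖u y - u z‖ = ‖y - z‖ := by
    intro y hy z hz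
    simpa [dist_eq_norm] using hd₁ y hy z hz
  have hnorm₂ : ∀ y ∈ U₂, ∀ z ∈ U₂, ‖u y - u z‖ = ‖y - z‖ := by
    intro y hy z hz
    simpa [dist_eq_norm] using hd₂ y hy z hz
  have hlip : ∀ y ∈ Ω, ∀ z ∈ Ω, ‖u y - u z‖ ≤ ‖y - z‖ := by
    intro y hy z hz
    have := hu.dist_le_mul y hy z hz
    simpa [dist_eq_norm] using this
  -- cross inequality (≥)
  have hge : ∀ y ∈ U₁, ∀ z ∈ U₂, ⟪y - x, z - x⟫ ≤ ⟪u y - u x, u z - u x⟫ := by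
    intro y hy z hz
    refine inner_ge_of_norm_le (hnorm₁ y hy x hx₁) (hnorm₂ z hz x hx₂) ?_
    rw [sub_sub_sub_cancel_right, sub_sub_sub_cancel_right]
    exact hlip y (hU₁Ω hy) z (hU₂Ω hz)
  -- cross inequality (≤), via reflection through x inside U₂
  have hle : ∀ y ∈ U₁, ∀ z ∈ U₂, ⟪u y - u x, u z - u x⟫ ≤ ⟪y - x, z - x⟫ := by
    intro y hy z hz
    rcases eq_or_ne z x with rfl | hzx
    · have : u z - u z = 0 := sub_self _
      simp [this]
    obtain ⟨ε, hε, hball⟩ := hxint₂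
    have hzx' : (0:ℝ) < ‖z - x‖ := by
      rw [norm_pos_iff]
      exact sub_ne_zero.mpr hzx
    set t : ℝ := ε / (2 * ‖z - x‖) with ht
    have htpos : 0 < t := div_pos hε (by positivity)
    set w : EuclideanSpace ℝ (Fin n) := (-t) • (z - x) + x with hwdef
    have hwx : w - x = (-t) • (z - x) := by rw [hwdef]; abel
    have hwU₂ : w ∈ U₂ := by
      apply hball
      constructor
      · rw [Metric.mem_ball, dist_eq_norm, hwx, norm_smul]
        rw [norm_neg, Real.norm_eq_abs, abs_of_pos htpos, ht]
        rw [div_mul_eq_mul_div, mul_comm 2 ‖z - x‖, ← div_div]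
        rw [mul_div_assoc, div_self (ne_of_gt hzx'), mul_one]
        linarith
      · have hmem := AffineSubspace.smul_vsub_vadd_mem (affineSpan ℝ U₂) (-t)
          (subset_affineSpan ℝ U₂ hz) (subset_affineSpan ℝ U₂ hx₂)
          (subset_affineSpan ℝ U₂ hx₂)
        simpa [vsub_eq_sub, vadd_eq_add, hwdef] using hmem
    -- u w - u x = (-t) • (u z - u x)
    have hlinz : A₂.linear (z - x) = u z - u x := by
      have := A₂.linearMap_vsub z x
      simp only [vsub_eq_sub] at this
      rw [this, hA₂ z hz, hA₂ x hx₂]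
    have hkey : u w - u x = (-t) • (u z - u x) := by
      have h1 := A₂.linearMap_vsub w x
      simp only [vsub_eq_sub] at h1
      calc u w - u x = A₂ w - A₂ x := by rw [hA₂ w hwU₂, hA₂ x hx₂]
        _ = A₂.linear (w - x) := h1.symm
        _ = (-t) • A₂.linear (z - x) := by rw [hwx, map_smul]
        _ = (-t) • (u z - u x) := by rw [hlinz]
    have hge' := hge y hy w hwU₂
    rw [hkey, hwx, real_inner_smul_right, real_inner_smul_right] at hge'
    nlinarith
  -- full inner-product preservation on S₀
  have hcross : ∀ y ∈ S₀, ∀ z ∈ S₀, ⟪u y - u x, u z - u x⟫ = ⟪y - x, z - x⟫ := by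
    have h12 : ∀ y ∈ U₁, ∀ z ∈ U₂, ⟪u y - u x, u z - u x⟫ = ⟪y - x, z - x⟫ :=
      fun y hy z hz => le_antisymm (hle y hy z hz) (hge y hy z hz)
    rintro y (hy | hy) z (hz | hz)
    · refine inner_eq_of_norm_eq (hnorm₁ y hy x hx₁) (hnorm₁ z hz x hx₁) ?_
      rw [sub_sub_sub_cancel_right, sub_sub_sub_cancel_right]
      exact hnorm₁ y hy z hz
    · exact h12 y hy z hz
    · rw [real_inner_comm (u z - u x) (u y - u x), real_inner_comm (z - x) (y - x)]
      exact h12 z hz y hy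
    · refine inner_eq_of_norm_eq (hnorm₂ y hy x hx₂) (hnorm₂ z hz x hx₂) ?_
      rw [sub_sub_sub_cancel_right, sub_sub_sub_cancel_right]
      exact hnorm₂ y hy z hz
  -- the linear span of S₀ - x
  set W : Submodule ℝ (EuclideanSpace ℝ (Fin n)) := Submodule.span ℝ ((fun y => y - x) '' S₀) with hW
  have hmemW : ∀ y ∈ S₀, y - x ∈ W := fun y hy => Submodule.subset_span ⟨y, hy, rfl⟩
  -- a basis of W made of vectors y - x with y ∈ S₀
  obtain ⟨b, hbsub, hbspan, hbli⟩ := exists_linearIndependent ℝ ((fun y => y - x) '' S₀)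
  have hrange : Submodule.span ℝ (Set.range (Subtype.val : b → EuclideanSpace ℝ (Fin n))) = W := by
    rw [Subtype.range_coe, hbspan]
  set B : Module.Basis b ℝ W := (Module.Basis.span hbli).map (LinearEquiv.ofEq _ _ hrange) with hB
  have hBcoe : ∀ i : b, (B i : EuclideanSpace ℝ (Fin n)) = (i : EuclideanSpace ℝ (Fin n)) := by
    intro i
    simp [hB, Module.Basis.span_apply]
  have hsel : ∀ i : b, ∃ y, y ∈ S₀ ∧ y - x = (i : EuclideanSpace ℝ (Fin n)) := by
    intro i
    obtain ⟨y, hy, hyx⟩ := hbsub i.2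
    exact ⟨y, hy, hyx⟩
  choose Y hY hYx using hsel
  set L : W →ₗ[ℝ] EuclideanSpace ℝ (Fin (n+1)) := B.constr ℝ (fun i => u (Y i) - u x) with hL
  have hLB : ∀ i : b, L (B i) = u (Y i) - u x := fun i => B.constr_basis ℝ _ i
  -- L preserves inner products
  have hLinner : ∀ v w : W, ⟪L v, L w⟫ = ⟪(v : EuclideanSpace ℝ (Fin n)), (w : EuclideanSpace ℝ (Fin n))⟫ := by
    have hPij : ∀ i j : b, ⟪L (B i), L (B j)⟫
        = ⟪((B i : W) : EuclideanSpace ℝ (Fin n)), ((B j : W) : EuclideanSpace ℝ (Fin n))⟫ := by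
      intro i j
      rw [hLB i, hLB j, hBcoe i, hBcoe j, ← hYx i, ← hYx j]
      exact hcross (Y i) (hY i) (Y j) (hY j)
    set P : W →ₗ[ℝ] W →ₗ[ℝ] ℝ := LinearMap.mk₂ ℝ
      (fun v w => ⟪L v, L w⟫ - ⟪(v : EuclideanSpace ℝ (Fin n)), (w : EuclideanSpace ℝ (Fin n))⟫)
      (by intro m₁ m₂ nn
          simp only [map_add, inner_add_left, Submodule.coe_add]
          ring)
      (by intro c m nn
          simp only [map_smul, real_inner_smul_left, Submodule.coe_smul, smul_eq_mul]
          ring)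
      (by intro m n₁ n₂
          simp only [map_add, inner_add_right, Submodule.coe_add]
          ring)
      (by intro c m nn
          simp only [map_smul, real_inner_smul_right, Submodule.coe_smul, smul_eq_mul]
          ring) with hPdef
    have hP0 : P = 0 := by
      refine B.ext fun i => B.ext fun j => ?_
      simp only [hPdef, LinearMap.mk₂_apply, LinearMap.zero_apply, sub_eq_zero]
      exact hPij i j
    intro v w
    have h := LinearMap.ext_iff.mp (LinearMap.ext_iff.mp hP0 v) w
    simp only [hPdef, LinearMap.mk₂_apply, LinearMap.zero_apply, sub_eq_zero] at h
    exact h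
  have hLnorm : ∀ v : W, ‖L v‖ = ‖(v : EuclideanSpace ℝ (Fin n))‖ := by
    intro v
    have h := hLinner v v
    rw [real_inner_self_eq_norm_sq, real_inner_self_eq_norm_sq] at h
    rw [← Real.sqrt_sq (norm_nonneg (L v)), ← Real.sqrt_sq (norm_nonneg ((v : EuclideanSpace ℝ (Fin n)))), h]
  -- L agrees with u on S₀
  have hLcoe : ∀ y (hy : y ∈ S₀), L ⟨y - x, hmemW y hy⟩ = u y - u x := by
    intro y hy
    set g : W →ₗ[ℝ] ℝ :=
      ((innerₛₗ ℝ (u y - u x)).comp L) - ((innerₛₗ ℝ (y - x)).comp W.subtype) with hgdef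
    have hg0 : g = 0 := by
      refine B.ext fun i => ?_
      simp only [hgdef, LinearMap.sub_apply, LinearMap.comp_apply, innerₛₗ_apply_apply,
        Submodule.subtype_apply, LinearMap.zero_apply, sub_eq_zero]
      rw [hLB i, hBcoe i, ← hYx i]
      rw [real_inner_comm (u (Y i) - u x) (u y - u x), real_inner_comm (Y i - x) (y - x)]
      exact hcross (Y i) (hY i) y hy
    set v : W := ⟨y - x, hmemW y hy⟩ with hv
    have hgv : ⟪u y - u x, L v⟫ = ⟪y - x, (v : EuclideanSpace ℝ (Fin n))⟫ := by
      have h := LinearMap.ext_iff.mp hg0 v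
      simp only [hgdef, LinearMap.sub_apply, LinearMap.comp_apply, innerₛₗ_apply_apply,
        Submodule.subtype_apply, LinearMap.zero_apply, sub_eq_zero] at h
      exact h
    have h1 : ⟪L v, u y - u x⟫ = ‖y - x‖ ^ 2 := by
      rw [real_inner_comm, hgv]
      rw [show ((v : EuclideanSpace ℝ (Fin n))) = y - x from rfl]
      exact real_inner_self_eq_norm_sq (y - x)
    have h2 : ‖L v‖ ^ 2 = ‖y - x‖ ^ 2 := by
      rw [hLnorm v]
    have h3 : ‖u y - u x‖ ^ 2 = ‖y - x‖ ^ 2 := by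
      have h := hcross y hy y hy
      rw [real_inner_self_eq_norm_sq, real_inner_self_eq_norm_sq] at h
      exact h
    have h4 : ‖L v - (u y - u x)‖ ^ 2 = 0 := by
      rw [norm_sub_sq_real, h1, h2, h3]
      ring
    have h5 : L v - (u y - u x) = 0 :=
      norm_eq_zero.mp ((pow_eq_zero_iff (two_ne_zero)).mp h4)
    exact sub_eq_zero.mp h5
  -- convex hull membership gives membership of difference in W
  have hconv : ∀ p ∈ convexHull ℝ S₀, p - x ∈ W := by
    intro p hp
    have hsub : convexHull ℝ S₀ ⊆ {p | p - x ∈ W} := by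
      refine convexHull_min (fun y hy => hmemW y hy) ?_
      intro p hp q hq a c ha hc hac
      have h : a • (p - x) + c • (q - x) = a • p + c • q - x := by
        rw [smul_sub, smul_sub]
        rw [show a • p - a • x + (c • q - c • x) = a • p + c • q - (a • x + c • x) by abel,
          ← add_smul, hac, one_smul]
      show a • p + c • q - x ∈ W
      rw [← h]
      exact W.add_mem (W.smul_mem _ hp) (W.smul_mem _ hq)
    exact hsub hp
  -- the key pointwise identity
  have hup : ∀ p (hp : p ∈ convexHull ℝ S₀), p ∈ Ω → u p = u x + L ⟨p - x, hconv p hp⟩ := by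
    intro p hp hpΩ
    have hp0 := hp
    rw [convexHull_eq] at hp0
    obtain ⟨ι, t, wgt, zf, hw0, hw1, hzs, hcm⟩ := hp0
    set z' : ι → EuclideanSpace ℝ (Fin n) := fun i => if i ∈ t then zf i else x with hz'
    have hz'S : ∀ i, z' i ∈ S₀ := by
      intro i; by_cases hi : i ∈ t
      · simpa [hz', hi] using hzs i hi
      · simpa [hz', hi] using hxS₀
    have hz'eq : ∀ i ∈ t, z' i = zf i := fun i hi => by simp [hz', hi]
    have hpsum : p = ∑ i ∈ t, wgt i • z' i := by
      rw [← hcm, Finset.centerMass_eq_of_sum_1 t zf hw1]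
      exact (Finset.sum_congr rfl fun i hi => by rw [hz'eq i hi]).symm
    have hpx : p - x = ∑ i ∈ t, wgt i • (z' i - x) := by
      have h : ∑ i ∈ t, wgt i • (z' i - x) = (∑ i ∈ t, wgt i • z' i) - x := by
        simp only [smul_sub, Finset.sum_sub_distrib, ← Finset.sum_smul, hw1, one_smul]
      rw [h, ← hpsum]
    set vW : ι → W := fun i => ⟨z' i - x, hmemW _ (hz'S i)⟩ with hvW
    have hvsum : (⟨p - x, hconv p hp⟩ : W) = ∑ i ∈ t, wgt i • vW i := by
      apply Subtype.ext
      rw [Submodule.coe_sum]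
      simp only [SetLike.val_smul, hvW]
      exact hpx
    have hLz : ∀ i, L (vW i) = u (z' i) - u x := fun i => hLcoe (z' i) (hz'S i)
    have hLp : L ⟨p - x, hconv p hp⟩ = ∑ i ∈ t, wgt i • (u (z' i) - u x) := by
      rw [hvsum, map_sum]
      exact Finset.sum_congr rfl fun i hi => by rw [map_smul, hLz i]
    set q := u x + L ⟨p - x, hconv p hp⟩ with hq
    have hqsum : q = ∑ i ∈ t, wgt i • u (z' i) := by
      rw [hq, hLp]
      simp only [smul_sub, Finset.sum_sub_distrib, ← Finset.sum_smul, hw1, one_smul]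
      abel
    have hqz : ∀ i ∈ t, ‖q - u (z' i)‖ = ‖p - z' i‖ := by
      intro i hi
      have h2 : u (z' i) = u x + L (vW i) := by rw [hLz i]; abel
      have e1 : q - u (z' i) = L (⟨p - x, hconv p hp⟩ - vW i) := by
        rw [hq, h2, map_sub]; abel
      rw [e1, hLnorm]
      rw [show ((⟨p - x, hconv p hp⟩ - vW i : W) : EuclideanSpace ℝ (Fin n))
          = (p - x) - (z' i - x) from rfl]
      rw [show (p - x) - (z' i - x) = p - z' i from by abel]
    have hlips : ∀ i ∈ t, ‖u p - u (z' i)‖ ≤ ‖p - z' i‖ :=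
      fun i _ => hlip p hpΩ (z' i) (hS₀Ω (hz'S i))
    have hexp : ∀ i ∈ t, ‖u p - u (z' i)‖^2
        = ‖u p - q‖^2 + 2 * ⟪u p - q, q - u (z' i)⟫ + ‖q - u (z' i)‖^2 := by
      intro i hi
      have h := norm_add_sq_real (u p - q) (q - u (z' i))
      rw [show (u p - q) + (q - u (z' i)) = u p - u (z' i) from by abel] at h
      exact h
    have hsum0 : ∑ i ∈ t, wgt i • (q - u (z' i)) = 0 := by
      simp only [smul_sub, Finset.sum_sub_distrib, ← Finset.sum_smul, hw1, one_smul]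
      rw [sub_eq_zero]
      exact hqsum
    have hinner0 : ∑ i ∈ t, wgt i * ⟪u p - q, q - u (z' i)⟫ = 0 := by
      have h : ∑ i ∈ t, wgt i * ⟪u p - q, q - u (z' i)⟫
          = ⟪u p - q, ∑ i ∈ t, wgt i • (q - u (z' i))⟫ := by
        rw [inner_sum]
        exact Finset.sum_congr rfl fun i hi => (real_inner_smul_right _ _ _).symm
      rw [h, hsum0, inner_zero_right]
    have hfin : ‖u p - q‖^2 ≤ 0 := by
      have hS1 : ∑ i ∈ t, wgt i * ‖u p - u (z' i)‖^2 ≤ ∑ i ∈ t, wgt i * ‖p - z' i‖^2 := by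
        refine Finset.sum_le_sum fun i hi => ?_
        refine mul_le_mul_of_nonneg_left ?_ (hw0 i hi)
        exact pow_le_pow_left₀ (norm_nonneg _) (hlips i hi) 2
      have hS2 : ∑ i ∈ t, wgt i * ‖u p - u (z' i)‖^2
          = ‖u p - q‖^2 + ∑ i ∈ t, wgt i * ‖p - z' i‖^2 := by
        rw [Finset.sum_congr rfl (fun i hi => by rw [hexp i hi, hqz i hi])]
        simp only [mul_add]
        rw [Finset.sum_add_distrib, Finset.sum_add_distrib]
        rw [← Finset.sum_mul, hw1, one_mul]
        have hz0 : ∑ i ∈ t, wgt i * (2 * ⟪u p - q, q - u (z' i)⟫) = 0 := by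
          have h2 : ∑ i ∈ t, wgt i * (2 * ⟪u p - q, q - u (z' i)⟫)
              = 2 * ∑ i ∈ t, wgt i * ⟪u p - q, q - u (z' i)⟫ := by
            rw [Finset.mul_sum]
            exact Finset.sum_congr rfl fun i hi => by ring
          rw [h2, hinner0, mul_zero]
        rw [hz0, add_zero]
      linarith [hS1, hS2]
    have hzero : ‖u p - q‖^2 = 0 := le_antisymm hfin (sq_nonneg _)
    have h5 : u p - q = 0 := norm_eq_zero.mp ((pow_eq_zero_iff two_ne_zero).mp hzero)
    exact sub_eq_zero.mp h5
  -- assemble the affine map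
  have hproj : ∀ v : EuclideanSpace ℝ (Fin n), v ∈ W → ((Submodule.orthogonalProjection W v : W) : EuclideanSpace ℝ (Fin n)) = v := by
    intro v hv
    exact Submodule.starProjection_eq_self_iff.mpr hv
  set Lc : EuclideanSpace ℝ (Fin n) →ₗ[ℝ] EuclideanSpace ℝ (Fin (n+1)) := L.comp (Submodule.orthogonalProjection W).toLinearMap with hLc
  set A : EuclideanSpace ℝ (Fin n) →ᵃ[ℝ] EuclideanSpace ℝ (Fin (n+1)) :=
    { toFun := fun p => u x + Lc (p - x)
      linear := Lc
      map_vadd' := by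
        intro p v
        show u x + Lc (v + p - x) = Lc v + (u x + Lc (p - x))
        rw [show v + p - x = v + (p - x) by abel, map_add]
        abel } with hA
  have hAval : ∀ p (hp : p ∈ convexHull ℝ S₀), A p = u x + L ⟨p - x, hconv p hp⟩ := by
    intro p hp
    show u x + Lc (p - x) = u x + L ⟨p - x, hconv p hp⟩
    congr 1
    show L (Submodule.orthogonalProjection W (p - x)) = L ⟨p - x, hconv p hp⟩
    congr 1
    exact Subtype.ext (hproj _ (hconv p hp))
  constructor
  · refine ⟨A, ?_⟩
    rintro y ⟨hy1, hy2⟩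
    rw [hup y hy1 hy2, hAval y hy1]
  · rintro p ⟨hp1, hp2⟩ q ⟨hq1, hq2⟩
    rw [dist_eq_norm, dist_eq_norm, hup p hp1 hp2, hup q hq1 hq2]
    rw [show u x + L ⟨p - x, hconv p hp1⟩ - (u x + L ⟨q - x, hconv q hq1⟩)
        = L (⟨p - x, hconv p hp1⟩ - ⟨q - x, hconv q hq1⟩) by rw [map_sub]; abel]
    rw [hLnorm]
    congr 1
    show (p - x) - (q - x) = p - q
    abel
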